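/- arXiv:1411.6487 — 3 statements merged into one kernel-verified Lean document; each statement's English description precedes it below -/
import Mathlib

section
/- Let (X, 𝓑, μ) be a probability space and T : X → X a measure-preserving transformation. For every integrable function φ and all integers 0 ≤ k ≤ i, the conditional expectation satisfies E[φ∘Tᵏ | T^{-i}𝓑] = (E[φ | T^{-(i-k)}𝓑]) ∘ Tᵏ almost everywhere. -/
open MeasureTheory

theorem condExp_comp_iterate {X : Type*} [m : MeasurableSpace X] (μ : Measure X)
    [IsProbabilityMeasure μ] (T : X → X) (hT : MeasurePreserving T μ μ)
    (φ : X → ℝ) (hφ : Integrable φ μ) (k i : ℕ) (hki : k ≤ i) :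
    μ[fun x => φ (T^[k] x) | MeasurableSpace.comap (T^[i]) m]
      =ᵐ[μ] fun x => (μ[φ | MeasurableSpace.comap (T^[i - k]) m]) (T^[k] x) := by
  have hTk : MeasurePreserving (T^[k]) μ μ := hT.iterate k
  have hTik : MeasurePreserving (T^[i - k]) μ μ := hT.iterate (i - k)
  have hTi : MeasurePreserving (T^[i]) μ μ := hT.iterate i
  have hcomp : T^[i] = T^[i - k] ∘ T^[k] := by
    rw [← Function.iterate_add, Nat.sub_add_cancel hki]
  have hle : MeasurableSpace.comap (T^[i]) m ≤ m := hTi.measurable.comap_le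
  have hle' : MeasurableSpace.comap (T^[i - k]) m ≤ m := hTik.measurable.comap_le
  haveI : SigmaFinite (μ.trim hle) := by
    haveI : IsFiniteMeasure (μ.trim hle) := isFiniteMeasure_trim hle
    infer_instance
  haveI : SigmaFinite (μ.trim hle') := by
    haveI : IsFiniteMeasure (μ.trim hle') := isFiniteMeasure_trim hle'
    infer_instance
  -- measurability of T^[k] from comap T^[i] to comap T^[i-k]
  have hmeas : @Measurable X X (MeasurableSpace.comap (T^[i]) m)
      (MeasurableSpace.comap (T^[i - k]) m) (T^[k]) := by
    rw [measurable_iff_comap_le, MeasurableSpace.comap_comp, ← hcomp]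
  set h := μ[φ | MeasurableSpace.comap (T^[i - k]) m] with hh
  have hint : Integrable (fun x => φ (T^[k] x)) μ := (hTk.integrable_comp hφ.aestronglyMeasurable).mpr hφ
  have hg_int : Integrable (fun x => h (T^[k] x)) μ :=
    (hTk.integrable_comp (stronglyMeasurable_condExp.mono hle').aestronglyMeasurable).mpr integrable_condExp
  refine (ae_eq_condExp_of_forall_setIntegral_eq hle hint
    (fun s _ _ => hg_int.integrableOn) (fun s hs hμs => ?_) ?_).symm
  · obtain ⟨B, hB, rfl⟩ := hs
    have hsplit : T^[i] ⁻¹' B = T^[k] ⁻¹' (T^[i - k] ⁻¹' B) := by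
      rw [hcomp]; rfl
    have hchg : ∀ (f : X → ℝ), AEStronglyMeasurable f μ →
        ∫ x in T^[k] ⁻¹' (T^[i - k] ⁻¹' B), f (T^[k] x) ∂μ
          = ∫ x in T^[i - k] ⁻¹' B, f x ∂μ := by
      intro f hf
      rw [← setIntegral_map (hTik.measurable hB) (by rwa [hTk.map_eq])
        hTk.measurable.aemeasurable, hTk.map_eq]
    rw [hsplit, hchg h (stronglyMeasurable_condExp.mono hle').aestronglyMeasurable,
      hchg φ hφ.aestronglyMeasurable, hh,
      setIntegral_condExp hle' hφ ⟨B, hB, rfl⟩]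
  · exact ((stronglyMeasurable_condExp).comp_measurable hmeas).aestronglyMeasurable
end

section
/- Let (Sₙ) be a sequence of real random variables on a probability space with an ergodic measure-preserving transformation, such that the event {sup_n |Sₙ| = +∞} is invariant. Suppose there are constants C, C₄ > 0 with E[Sₙ²] ≥ C²·σₙ² and E[Sₙ⁴] ≤ C₄⁴·σₙ⁴ where σₙ² → ∞. Then sup_n |Sₙ| = +∞ almost everywhere. -/
open MeasureTheory Filter

/-- A Paley–Zygmund type second-moment lower bound on `μ {x | m/2 ≤ Z x}`. -/
lemma pz_aux {X : Type*} [MeasurableSpace X] (μ : Measure X) [IsProbabilityMeasure μ]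
    (Z : X → ℝ) (hZm : Measurable Z) (hZ0 : ∀ x, 0 ≤ Z x)
    (hZi : Integrable Z μ) (hZ2 : Integrable (fun x => Z x ^ 2) μ)
    (m K : ℝ) (hm : 0 < m) (hK : 0 < K)
    (hmle : m ≤ ∫ x, Z x ∂μ) (hK2 : ∫ x, Z x ^ 2 ∂μ ≤ K) :
    m ^ 2 / (16 * K) ≤ (μ {x | m / 2 ≤ Z x}).toReal := by
  set B : Set X := {x | m / 2 ≤ Z x} with hBdef
  have hB : MeasurableSet B := measurableSet_le measurable_const hZm
  set s : ℝ := 4 * K / m with hsdef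
  have hs : 0 < s := by positivity
  -- bound on the complement
  have h1 : ∫ x in Bᶜ, Z x ∂μ ≤ m / 2 := by
    have hle : ∫ x in Bᶜ, Z x ∂μ ≤ ∫ _x in Bᶜ, (m / 2) ∂μ := by
      refine setIntegral_mono_on hZi.integrableOn (integrableOn_const ?_) hB.compl ?_
      · exact measure_ne_top μ _
      · intro x hx
        exact le_of_lt (not_le.mp hx)
    have hconst : ∫ _x in Bᶜ, (m / 2) ∂μ = (μ Bᶜ).toReal * (m / 2) := by
      rw [setIntegral_const, smul_eq_mul]; rfl
    have hμ : (μ Bᶜ).toReal ≤ 1 := by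
      have h := prob_le_one (μ := μ) (s := Bᶜ)
      simpa using ENNReal.toReal_mono (by simp) h
    nlinarith [hle, ENNReal.toReal_nonneg (a := μ Bᶜ)]
  -- bound on B
  have h2 : ∫ x in B, Z x ∂μ ≤ s * (μ B).toReal + K / s := by
    have hpt : ∀ x, Z x ≤ s + Z x ^ 2 / s := by
      intro x
      have h1 : Z x * s ≤ s * s + Z x ^ 2 := by nlinarith [sq_nonneg (s - Z x)]
      calc Z x = Z x * s / s := by field_simp
        _ ≤ (s * s + Z x ^ 2) / s := by gcongr
        _ = s + Z x ^ 2 / s := by rw [add_div]; congr 1; field_simp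
    have hint : Integrable (fun x => s + Z x ^ 2 / s) μ :=
      (integrable_const s).add (hZ2.div_const s)
    have hle : ∫ x in B, Z x ∂μ ≤ ∫ x in B, (s + Z x ^ 2 / s) ∂μ :=
      setIntegral_mono_on hZi.integrableOn hint.integrableOn hB (fun x _ => hpt x)
    have hsplit : ∫ x in B, (s + Z x ^ 2 / s) ∂μ
        = (μ B).toReal * s + (∫ x in B, Z x ^ 2 ∂μ) / s := by
      rw [integral_add (integrableOn_const (C := s) (measure_ne_top μ B))
        (hZ2.div_const s).integrableOn, setIntegral_const, smul_eq_mul, integral_div, Measure.real]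
    have hZ2le : ∫ x in B, Z x ^ 2 ∂μ ≤ K :=
      le_trans (setIntegral_le_integral hZ2 (Filter.Eventually.of_forall fun x => sq_nonneg _)) hK2
    have hdivle : (∫ x in B, Z x ^ 2 ∂μ) / s ≤ K / s := by gcongr
    linarith [hsplit ▸ hle]
  -- combine
  have hsum : ∫ x, Z x ∂μ = ∫ x in B, Z x ∂μ + ∫ x in Bᶜ, Z x ∂μ :=
    (integral_add_compl hB hZi).symm
  have hKs : K / s = m / 4 := by
    rw [hsdef]; field_simp
  have hmain : m / 4 ≤ s * (μ B).toReal := by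
    rw [hsum] at hmle
    linarith
  rw [div_le_iff₀ (by positivity)]
  have hms : m / 4 / s = m ^ 2 / (16 * K) := by
    rw [hsdef]; field_simp; ring
  calc m ^ 2 = (m / 4 / s) * (16 * K) := by rw [hms]; field_simp
    _ ≤ (μ B).toReal * (16 * K) := by
        apply mul_le_mul_of_nonneg_right _ (by positivity)
        rw [div_le_iff₀ hs]
        linarith

theorem sup_infinite_ae_of_moments {X : Type*} [MeasurableSpace X] (μ : Measure X)
    [IsProbabilityMeasure μ] (T : X → X) (hT : Ergodic T μ)
    (S : ℕ → X → ℝ) (hSmeas : ∀ n, Measurable (S n))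
    (hinv : T ⁻¹' {x | ¬ BddAbove (Set.range fun n => |S n x|)}
      = {x | ¬ BddAbove (Set.range fun n => |S n x|)})
    (σ : ℕ → ℝ) (hσ : Tendsto (fun n => σ n ^ 2) atTop atTop)
    (C C₄ : ℝ) (hC : 0 < C) (hC₄ : 0 < C₄)
    (hint2 : ∀ n, Integrable (fun x => S n x ^ 2) μ)
    (hint4 : ∀ n, Integrable (fun x => S n x ^ 4) μ)
    (hlow : ∀ n, C ^ 2 * σ n ^ 2 ≤ ∫ x, S n x ^ 2 ∂μ)
    (hup : ∀ n, ∫ x, S n x ^ 4 ∂μ ≤ C₄ ^ 4 * σ n ^ 4) :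
    ∀ᵐ x ∂μ, ¬ BddAbove (Set.range fun n => |S n x|) := by
  set A : Set X := {x | ¬ BddAbove (Set.range fun n => |S n x|)} with hAdef
  set E : ℕ → Set X := fun M => ⋃ n, {x | (M : ℝ) < |S n x|} with hEdef
  have hEmeas : ∀ M, MeasurableSet (E M) := fun M =>
    MeasurableSet.iUnion fun n => measurableSet_lt measurable_const (hSmeas n).abs
  have hAE : A = ⋂ M, E M := by
    ext x
    simp only [hAdef, hEdef, Set.mem_setOf_eq, Set.mem_iInter, Set.mem_iUnion,
      not_bddAbove_iff, Set.mem_range]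
    constructor
    · intro h M
      obtain ⟨y, ⟨n, hn⟩, hy⟩ := h (M : ℝ)
      exact ⟨n, hn ▸ hy⟩
    · intro h b
      obtain ⟨n, hn⟩ := h ⌈b⌉₊
      exact ⟨|S n x|, ⟨n, rfl⟩, lt_of_le_of_lt (Nat.le_ceil b) hn⟩
  have hAmeas : MeasurableSet A := hAE ▸ MeasurableSet.iInter fun M => hEmeas M
  set c : ℝ := C ^ 4 / (16 * C₄ ^ 4) with hcdef
  have hc0 : 0 < c := by positivity
  -- each E M has measure at least c
  have hEc : ∀ M : ℕ, ENNReal.ofReal c ≤ μ (E M) := by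
    intro M
    obtain ⟨n, hn⟩ := (hσ.eventually_ge_atTop (max 1 (2 * (M : ℝ) ^ 2 / C ^ 2 + 1))).exists
    have hσ1 : (1 : ℝ) ≤ σ n ^ 2 := le_trans (le_max_left _ _) hn
    have hσM : 2 * (M : ℝ) ^ 2 / C ^ 2 + 1 ≤ σ n ^ 2 := le_trans (le_max_right _ _) hn
    have hσ4 : σ n ^ 4 = (σ n ^ 2) ^ 2 := by ring
    have hσ4pos : 0 < σ n ^ 4 := by rw [hσ4]; nlinarith
    have heq2 : (fun x => (S n x ^ 2) ^ 2) = fun x => S n x ^ 4 := by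
      funext x; ring
    have key := pz_aux μ (fun x => S n x ^ 2) ((hSmeas n).pow_const 2)
      (fun x => sq_nonneg _) (hint2 n) (by rw [heq2]; exact hint4 n)
      (C ^ 2 * σ n ^ 2) (C₄ ^ 4 * σ n ^ 4)
      (by nlinarith) (by positivity) (hlow n)
      (by rw [heq2]; exact hup n)
    have hcval : c ≤ (C ^ 2 * σ n ^ 2) ^ 2 / (16 * (C₄ ^ 4 * σ n ^ 4)) := by
      rw [hcdef]
      rw [div_le_div_iff₀ (by positivity) (by positivity)]
      nlinarith [hσ4pos, sq_nonneg (σ n)]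
    have hsub : {x | C ^ 2 * σ n ^ 2 / 2 ≤ S n x ^ 2} ⊆ E M := by
      intro x hx
      simp only [Set.mem_setOf_eq] at hx
      have hdiv : 2 * (M : ℝ) ^ 2 / C ^ 2 * C ^ 2 = 2 * (M : ℝ) ^ 2 := by
        field_simp
      have hmul := mul_le_mul_of_nonneg_right hσM (sq_nonneg C)
      have hM2 : (M : ℝ) ^ 2 < S n x ^ 2 := by nlinarith [sq_nonneg C, hC, hx]
      have : (M : ℝ) < |S n x| := by
        have := abs_nonneg (S n x)
        nlinarith [sq_abs (S n x), abs_nonneg (S n x), Nat.cast_nonneg (α := ℝ) M]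
      exact Set.mem_iUnion.2 ⟨n, this⟩
    calc ENNReal.ofReal c
        ≤ ENNReal.ofReal ((μ {x | C ^ 2 * σ n ^ 2 / 2 ≤ S n x ^ 2}).toReal) := by
          exact ENNReal.ofReal_le_ofReal (le_trans hcval key)
      _ = μ {x | C ^ 2 * σ n ^ 2 / 2 ≤ S n x ^ 2} :=
          ENNReal.ofReal_toReal (measure_ne_top μ _)
      _ ≤ μ (E M) := measure_mono hsub
  -- hence A has measure at least c
  have hAc : ENNReal.ofReal c ≤ μ A := by
    rw [hAE]
    have hanti : Antitone E := by
      intro M M' hMM' x hx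
      obtain ⟨n, hn⟩ := Set.mem_iUnion.1 hx
      have hn' : (M' : ℝ) < |S n x| := hn
      have hle : (M : ℝ) ≤ (M' : ℝ) := Nat.cast_le.2 hMM'
      exact Set.mem_iUnion.2 ⟨n, Set.mem_setOf_eq ▸ lt_of_le_of_lt hle hn'⟩
    rw [Directed.measure_iInter (fun M => (hEmeas M).nullMeasurableSet)
      (hanti.directed_ge) ⟨0, measure_ne_top μ _⟩]
    exact le_iInf hEc
  -- ergodicity
  rcases hT.measure_self_or_compl_eq_zero hAmeas hinv with h | h
  · exfalso
    rw [h, le_zero_iff, ENNReal.ofReal_eq_zero] at hAc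
    linarith
  · rw [ae_iff]
    simpa [hAdef, Set.compl_setOf, not_not] using h
end

section
/- Let δ > 0, f ∈ C^{1+δ}(𝕋) (f continuously differentiable with δ-Hölder derivative, periodic with period 1), (aₙ) a bounded sequence with aₙ → 0, and F(x) = Σ_{n=0}^∞ aₙ 3^{-n} f(3ⁿx). Fix x ∈ 𝕋. Then F is differentiable at x if and only if the series Σ_{n=0}^∞ aₙ f'(3ⁿx) converges, and in that case F'(x) = Σ_{n=0}^∞ aₙ f'(3ⁿx). -/
open Filter Finset

lemma taylor_est (δ C : ℝ) (hδ : 0 < δ) (f : ℝ → ℝ) (hdiff : Differentiable ℝ f)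
    (hH : ∀ x y : ℝ, |deriv f x - deriv f y| ≤ C * |x - y| ^ δ) :
    ∀ p q : ℝ, |f q - f p - deriv f p * (q - p)| ≤ C * |q - p| ^ (1 + δ) := by
  have hC : 0 ≤ C := le_trans (abs_nonneg _) (by simpa using hH 0 1)
  have key : ∀ p q : ℝ, p < q → ∀ z : ℝ, p ≤ z → z ≤ q →
      |f q - f p - deriv f z * (q - p)| ≤ C * (q - p) ^ (1 + δ) := by
    intro p q hpq z hz1 hz2
    have hne : q - p ≠ 0 := ne_of_gt (sub_pos.mpr hpq)
    obtain ⟨ξ, hξ, hξeq⟩ := exists_hasDerivAt_eq_slope f (deriv f) hpq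
      (hdiff.continuous.continuousOn) (fun y _ => (hdiff y).hasDerivAt)
    have h1 : f q - f p = deriv f ξ * (q - p) := by
      rw [hξeq]; field_simp
    have h2 : |ξ - z| ≤ q - p := by
      rw [abs_sub_le_iff]; constructor <;> nlinarith [hξ.1, hξ.2]
    have h3 : |deriv f ξ - deriv f z| ≤ C * (q - p) ^ δ := by
      refine (hH ξ z).trans ?_
      exact mul_le_mul_of_nonneg_left (Real.rpow_le_rpow (abs_nonneg _) h2 hδ.le) hC
    calc |f q - f p - deriv f z * (q - p)| = |deriv f ξ - deriv f z| * |q - p| := by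
          rw [h1, show deriv f ξ * (q - p) - deriv f z * (q - p)
            = (deriv f ξ - deriv f z) * (q - p) by ring, abs_mul]
      _ ≤ (C * (q - p) ^ δ) * (q - p) := by
          rw [abs_of_pos (sub_pos.mpr hpq)]
          exact mul_le_mul_of_nonneg_right h3 (by linarith)
      _ = C * (q - p) ^ (1 + δ) := by
          rw [Real.rpow_add (sub_pos.mpr hpq), Real.rpow_one]; ring
  intro p q
  rcases lt_trichotomy p q with h | h | h
  · have := key p q h p le_rfl h.le
    rwa [abs_of_pos (sub_pos.mpr h)]
  · subst h
    simp [Real.zero_rpow (by positivity : (1:ℝ) + δ ≠ 0)]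
  · have h4 := key q p h p h.le le_rfl
    have e : |f q - f p - deriv f p * (q - p)| = |f p - f q - deriv f p * (p - q)| := by
      rw [← abs_neg]; congr 1; ring
    rw [e, abs_sub_comm q p, abs_of_pos (sub_pos.mpr h)]
    exact h4

theorem weierstrass_differentiability (δ : ℝ) (hδ : 0 < δ)
    (f : ℝ → ℝ) (hper : Function.Periodic f 1) (hdiff : Differentiable ℝ f)
    (hholder : ∃ C : ℝ, ∀ x y : ℝ, |deriv f x - deriv f y| ≤ C * |x - y| ^ δ)
    (a : ℕ → ℝ) (hbdd : ∃ M : ℝ, ∀ n, |a n| ≤ M) (h0 : Tendsto a atTop (nhds 0))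
    (F : ℝ → ℝ) (hF : F = fun x => ∑' n : ℕ, a n * (3 : ℝ) ^ (-(n : ℤ)) * f (3 ^ n * x))
    (x : ℝ) :
    (DifferentiableAt ℝ F x ↔
      ∃ l : ℝ, Tendsto (fun N => ∑ n ∈ Finset.range N, a n * deriv f (3 ^ n * x))
        atTop (nhds l)) ∧
    ∀ l : ℝ, Tendsto (fun N => ∑ n ∈ Finset.range N, a n * deriv f (3 ^ n * x))
        atTop (nhds l) → HasDerivAt F l x := by
  obtain ⟨C, hH⟩ := hholder
  have hC : 0 ≤ C := le_trans (abs_nonneg _) (by simpa using hH 0 1)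
  obtain ⟨M, hM⟩ := hbdd
  have hM0 : 0 ≤ M := (abs_nonneg _).trans (hM 0)
  obtain ⟨B, hB0, hfB⟩ : ∃ B : ℝ, 0 ≤ B ∧ ∀ y : ℝ, |f y| ≤ B := by
    obtain ⟨B, hB⟩ := (isCompact_Icc (a := (0:ℝ)) (b := 1)).exists_bound_of_continuousOn
      hdiff.continuous.continuousOn
    refine ⟨max B 0, le_max_right _ _, fun y => ?_⟩
    have h1 : f y = f (Int.fract y) := by
      have := hper.sub_int_mul_eq (x := y) ⌊y⌋
      rw [← this]; congr 1; rw [Int.fract]; ring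
    rw [h1, ← Real.norm_eq_abs]
    exact le_trans (hB _ ⟨Int.fract_nonneg y, (Int.fract_lt_one y).le⟩) (le_max_left _ _)
  set S : ℕ → ℝ := fun N => ∑ n ∈ Finset.range N, a n * deriv f (3 ^ n * x) with hS
  -- rewrite F
  have hFg : ∀ y : ℝ, F y = ∑' n : ℕ, a n * ((3:ℝ)^n)⁻¹ * f (3 ^ n * y) := by
    intro y; rw [hF]
    simp [zpow_neg, zpow_natCast]
  have hsum : ∀ y : ℝ, Summable (fun n : ℕ => a n * ((3:ℝ)^n)⁻¹ * f (3 ^ n * y)) := by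
    intro y
    refine Summable.of_norm_bounded (g := fun n => (M * B) * (1/3:ℝ)^n)
      ((summable_geometric_of_lt_one (by norm_num) (by norm_num)).mul_left _) (fun n => ?_)
    rw [Real.norm_eq_abs, abs_mul, abs_mul, abs_inv, abs_pow]
    have h1 : |(3:ℝ)| = 3 := by norm_num
    rw [h1]
    calc |a n| * ((3:ℝ)^n)⁻¹ * |f (3^n * y)| ≤ M * ((3:ℝ)^n)⁻¹ * B := by
          gcongr
          · exact hM n
          · exact hfB _
      _ = M * B * (1/3:ℝ)^n := by rw [one_div, inv_pow]; ring
  -- the key quantitative estimate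
  set r : ℝ := (3:ℝ) ^ δ with hr
  have hr1 : 1 < r := by
    rw [hr]
    exact (Real.one_lt_rpow_iff_of_pos (by norm_num)).mpr (Or.inl ⟨by norm_num, hδ⟩)
  have hrpos : 0 < r := lt_trans one_pos hr1
  have hpow3 : ∀ n : ℕ, ((3:ℝ)^n) ^ δ = r ^ n := by
    intro n
    rw [← Real.rpow_natCast (3:ℝ) n, ← Real.rpow_natCast r n, hr,
      ← Real.rpow_mul (by norm_num), ← Real.rpow_mul (by norm_num), mul_comm]
  set K : ℝ := C * M * r / (r - 1) with hK
  have hK0 : 0 ≤ K := by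
    apply div_nonneg (by positivity) (by linarith)
  have key : ∀ (t : ℝ), 0 ≤ t → ∀ N : ℕ, (∀ n : ℕ, N < n → |a n| ≤ t) →
      ∀ h : ℝ, h ≠ 0 →
      |(F (x + h) - F x) / h - S (N + 1)| ≤
        K * r ^ N * |h| ^ δ + B * t * ((1/3:ℝ)^N / |h|) := by
    intro t ht N haN h hh
    have hhpos : 0 < |h| := abs_pos.mpr hh
    set d : ℕ → ℝ := fun n => a n * ((3:ℝ)^n)⁻¹ * (f (3^n * (x+h)) - f (3^n * x)) with hd
    have hdsum : Summable d := by
      have e : d = fun n => (a n * ((3:ℝ)^n)⁻¹ * f (3^n*(x+h))) -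
          (a n * ((3:ℝ)^n)⁻¹ * f (3^n*x)) := by
        funext n; rw [hd]; ring
      rw [e]; exact (hsum (x+h)).sub (hsum x)
    have hFd : F (x+h) - F x = ∑' n, d n := by
      rw [hFg, hFg, ← Summable.tsum_sub (hsum (x+h)) (hsum x)]
      exact tsum_congr fun n => by rw [hd]; ring
    have hsplit := Summable.sum_add_tsum_nat_add (f := d) (N+1) hdsum
    have hterm : ∀ n : ℕ, |d n / h - a n * deriv f (3^n * x)| ≤ (C*M*|h|^δ) * r^n := by
      intro n
      have h3n : (0:ℝ) < 3^n := by positivity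
      have e1 : d n / h - a n * deriv f (3^n*x) =
          (a n * ((3:ℝ)^n)⁻¹ / h) *
          (f (3^n*(x+h)) - f (3^n*x) - deriv f (3^n*x) * ((3:ℝ)^n*h)) := by
        rw [hd]; field_simp
      rw [e1, abs_mul]
      have htay := taylor_est δ C hδ f hdiff hH (3^n*x) (3^n*(x+h))
      have e2 : (3:ℝ)^n*(x+h) - 3^n*x = 3^n*h := by ring
      rw [e2] at htay
      have e3 : |(3:ℝ)^n * h| = 3^n * |h| := by rw [abs_mul, abs_of_pos h3n]
      rw [e3] at htay
      have e4 : ((3:ℝ)^n * |h|) ^ (1+δ) = (3^n * |h|) * (r^n * |h|^δ) := by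
        rw [Real.rpow_add (by positivity), Real.rpow_one,
          Real.mul_rpow (le_of_lt h3n) (abs_nonneg h), hpow3]
      rw [e4] at htay
      have e5 : |a n * ((3:ℝ)^n)⁻¹ / h| = |a n| * ((3:ℝ)^n)⁻¹ / |h| := by
        rw [abs_div, abs_mul, abs_inv, abs_pow]; norm_num
      rw [e5]
      calc |a n| * ((3:ℝ)^n)⁻¹ / |h| * |f (3^n*(x+h)) - f (3^n*x) - deriv f (3^n*x) * (3^n*h)|
          ≤ (M * ((3:ℝ)^n)⁻¹ / |h|) * (C * ((3^n * |h|) * (r^n * |h|^δ))) := by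
            refine mul_le_mul ?_ htay (abs_nonneg _) (by positivity)
            gcongr
            exact hM n
        _ = (C*M*|h|^δ) * r^n := by
            field_simp
    have hsum_main : |∑ n ∈ range (N+1), (d n / h - a n * deriv f (3^n * x))|
        ≤ K * r^N * |h|^δ := by
      calc |∑ n ∈ range (N+1), (d n / h - a n * deriv f (3^n * x))|
          ≤ ∑ n ∈ range (N+1), |d n / h - a n * deriv f (3^n * x)| :=
            Finset.abs_sum_le_sum_abs _ _
        _ ≤ ∑ n ∈ range (N+1), (C*M*|h|^δ) * r^n :=
            Finset.sum_le_sum (fun n _ => hterm n)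
        _ = (C*M*|h|^δ) * ((r^(N+1) - 1)/(r-1)) := by
            rw [← Finset.mul_sum, geom_sum_eq (ne_of_gt hr1)]
        _ ≤ (C*M*|h|^δ) * (r^(N+1)/(r-1)) := by
            have h1 : (0:ℝ) ≤ r - 1 := by linarith
            have h2 : (r^(N+1) - 1)/(r-1) ≤ r^(N+1)/(r-1) :=
              div_le_div_of_nonneg_right (by linarith) h1
            have h3 : (0:ℝ) ≤ C*M*|h|^δ :=
              mul_nonneg (mul_nonneg hC hM0) (Real.rpow_nonneg (abs_nonneg h) δ)
            exact mul_le_mul_of_nonneg_left h2 h3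
        _ = K * r^N * |h|^δ := by
            rw [hK, pow_succ]
            have h1 : r - 1 ≠ 0 := by linarith
            field_simp
    have habsd : ∀ n : ℕ, N < n → |d n| ≤ (2*(B*t)) * (1/3:ℝ)^n := by
      intro n hn
      rw [hd]
      simp only
      rw [abs_mul, abs_mul, abs_inv, abs_pow, show |(3:ℝ)| = 3 by norm_num]
      have h1 : |f (3^n*(x+h)) - f (3^n*x)| ≤ 2*B := by
        calc |f (3^n*(x+h)) - f (3^n*x)| ≤ |f (3^n*(x+h))| + |f (3^n*x)| := abs_sub _ _
          _ ≤ B + B := add_le_add (hfB _) (hfB _)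
          _ = 2*B := by ring
      calc |a n| * ((3:ℝ)^n)⁻¹ * |f (3^n*(x+h)) - f (3^n*x)| ≤ t * ((3:ℝ)^n)⁻¹ * (2*B) := by
            exact mul_le_mul (mul_le_mul (haN n hn) le_rfl (by positivity) ht) h1
              (abs_nonneg _) (mul_nonneg ht (by positivity))
        _ = (2*(B*t)) * (1/3:ℝ)^n := by rw [one_div, inv_pow]; ring
    have htail : |∑' n : ℕ, d (n + (N+1))| ≤ B * t * (1/3:ℝ)^N := by
      have hsb : Summable (fun n : ℕ => (2*(B*t)) * ((1/3:ℝ)^n * (1/3:ℝ)^(N+1))) := by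
        have := (summable_geometric_of_lt_one (r := (1/3:ℝ)) (by norm_num) (by norm_num))
        exact ((this.mul_right _).mul_left _)
      have hb : ∀ n : ℕ, ‖d (n + (N+1))‖ ≤ (2*(B*t)) * ((1/3:ℝ)^n * (1/3:ℝ)^(N+1)) := by
        intro n
        rw [Real.norm_eq_abs, ← pow_add]
        exact habsd _ (by omega)
      have hdn : Summable (fun n : ℕ => ‖d (n + (N+1))‖) := by
        exact Summable.of_nonneg_of_le (fun n => norm_nonneg _) hb hsb
      calc |∑' n : ℕ, d (n + (N+1))| ≤ ∑' n : ℕ, ‖d (n + (N+1))‖ := by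
            rw [← Real.norm_eq_abs]; exact norm_tsum_le_tsum_norm hdn
        _ ≤ ∑' n : ℕ, (2*(B*t)) * ((1/3:ℝ)^n * (1/3:ℝ)^(N+1)) :=
            Summable.tsum_le_tsum hb hdn hsb
        _ = (2*(B*t)) * ((1/3:ℝ)^(N+1) * (1-(1/3:ℝ))⁻¹) := by
            rw [tsum_mul_left, tsum_mul_right, tsum_geometric_of_lt_one (by norm_num) (by norm_num)]
            ring
        _ = B * t * (1/3:ℝ)^N := by
            rw [pow_succ]; norm_num; ring
    have hslope : (F (x+h) - F x)/h - S (N+1) =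
        (∑ n ∈ range (N+1), (d n / h - a n * deriv f (3^n * x))) + (∑' n, d (n+(N+1)))/h := by
      rw [hFd, ← hsplit, hS]
      rw [add_div, Finset.sum_div, Finset.sum_sub_distrib]
      ring
    rw [hslope]
    calc |(∑ n ∈ range (N+1), (d n / h - a n * deriv f (3^n * x))) + (∑' n, d (n+(N+1)))/h|
        ≤ |∑ n ∈ range (N+1), (d n / h - a n * deriv f (3^n * x))| + |(∑' n, d (n+(N+1)))/h| :=
          abs_add_le _ _
      _ ≤ K * r^N * |h|^δ + (B * t * (1/3:ℝ)^N)/|h| := by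
          rw [abs_div]
          exact add_le_add hsum_main (div_le_div_of_nonneg_right htail (abs_nonneg h))
      _ = K * r^N * |h|^δ + B * t * ((1/3:ℝ)^N / |h|) := by ring
  -- common epsilon machinery
  have key2 : ∀ ε : ℝ, 0 < ε → ∃ c : ℝ, 0 < c ∧ c ≤ 1 ∧ ∃ N₀ : ℕ, ∀ N : ℕ, N₀ ≤ N →
      ∀ h : ℝ, h ≠ 0 → |h| ≤ c * (1/3:ℝ)^N → c * (1/3:ℝ)^(N+1) ≤ |h| →
      |(F (x + h) - F x) / h - S (N + 1)| < ε := by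
    intro ε hε
    set ε' := ε/3 with hε'
    have hε'pos : 0 < ε' := by positivity
    set c : ℝ := min 1 ((ε'/(K+1)) ^ δ⁻¹) with hc
    have hc0 : 0 < c := lt_min one_pos (Real.rpow_pos_of_pos (by positivity) _)
    have hc1 : c ≤ 1 := min_le_left _ _
    have hcδ : K * c ^ δ ≤ ε' := by
      have h1 : c ^ δ ≤ ε'/(K+1) := by
        calc c ^ δ ≤ ((ε'/(K+1)) ^ δ⁻¹) ^ δ :=
              Real.rpow_le_rpow hc0.le (min_le_right _ _) hδ.le
          _ = ε'/(K+1) := Real.rpow_inv_rpow (by positivity) (ne_of_gt hδ)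
      calc K * c ^ δ ≤ (K+1) * (ε'/(K+1)) :=
            mul_le_mul (by linarith) h1 (Real.rpow_nonneg hc0.le δ) (by linarith)
        _ = ε' := by field_simp
    set t : ℝ := ε' * c / (3*(B+1)) with htdef
    have ht0 : 0 < t := by positivity
    obtain ⟨N₀, hN₀⟩ := (Metric.tendsto_atTop.mp h0) t ht0
    refine ⟨c, hc0, hc1, N₀, fun N hN h hh hupper hlower => ?_⟩
    have hhpos : 0 < |h| := abs_pos.mpr hh
    have haN : ∀ n : ℕ, N < n → |a n| ≤ t := by
      intro n hn
      have := hN₀ n (by omega)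
      rw [Real.dist_eq, sub_zero] at this
      exact this.le
    have hkey := key t ht0.le N haN h hh
    have e1 : K * r^N * |h|^δ ≤ ε' := by
      have h1 : |h|^δ ≤ c^δ * (r^N)⁻¹ := by
        calc |h|^δ ≤ (c * (1/3:ℝ)^N)^δ := Real.rpow_le_rpow (abs_nonneg h) hupper hδ.le
          _ = c^δ * (((1/3:ℝ)^N) : ℝ)^δ := Real.mul_rpow hc0.le (by positivity)
          _ = c^δ * (r^N)⁻¹ := by
              congr 1
              rw [one_div, inv_pow, Real.inv_rpow (by positivity), hpow3]
      calc K * r^N * |h|^δ ≤ K * r^N * (c^δ * (r^N)⁻¹) := by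
            refine mul_le_mul_of_nonneg_left h1 (mul_nonneg hK0 (by positivity))
        _ = K * c^δ := by
            have : (r:ℝ)^N ≠ 0 := by positivity
            field_simp
        _ ≤ ε' := hcδ
    have e2 : B * t * ((1/3:ℝ)^N / |h|) ≤ ε' := by
      have h1 : (1/3:ℝ)^N / |h| ≤ 3 / c := by
        rw [div_le_div_iff₀ hhpos hc0]
        have h2 : c * ((1/3:ℝ)^N * (1/3)) ≤ |h| := by
          rw [← pow_succ]; exact hlower
        nlinarith
      calc B * t * ((1/3:ℝ)^N / |h|) ≤ B * t * (3/c) :=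
            mul_le_mul_of_nonneg_left h1 (mul_nonneg hB0 ht0.le)
        _ = ε' * (B/(B+1)) := by
            rw [htdef]
            field_simp
        _ ≤ ε' * 1 := by
            refine mul_le_mul_of_nonneg_left ?_ hε'pos.le
            rw [div_le_one (by linarith)]
            linarith
        _ = ε' := mul_one _
    calc |(F (x + h) - F x) / h - S (N + 1)|
        ≤ K * r^N * |h|^δ + B * t * ((1/3:ℝ)^N / |h|) := hkey
      _ ≤ ε' + ε' := add_le_add e1 e2
      _ < ε := by rw [hε']; linarith
  have main : ∀ l : ℝ, Tendsto S atTop (nhds l) → HasDerivAt F l x := by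
    intro l hl
    rw [hasDerivAt_iff_tendsto_slope, Metric.tendsto_nhdsWithin_nhds]
    intro ε hε
    obtain ⟨c, hc0, hc1, N₀, hkey2⟩ := key2 (ε/2) (by positivity)
    obtain ⟨N₁, hN₁⟩ := (Metric.tendsto_atTop.mp hl) (ε/2) (by positivity)
    set N₂ := max N₀ N₁ with hN₂
    refine ⟨c * (1/3:ℝ)^(N₂+1), by positivity, fun y hy hdist => ?_⟩
    set h : ℝ := y - x with hhdef
    have hh : h ≠ 0 := sub_ne_zero.mpr hy
    have hhpos : 0 < |h| := abs_pos.mpr hh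
    have hdist' : |h| < c * (1/3:ℝ)^(N₂+1) := by rwa [Real.dist_eq] at hdist
    have hex : ∃ k : ℕ, c * (1/3:ℝ)^(k+1) < |h| := by
      obtain ⟨k, hk⟩ := exists_pow_lt_of_lt_one (x := |h|/c)
        (by positivity) (by norm_num : (1/3:ℝ) < 1)
      rw [lt_div_iff₀ hc0] at hk
      have h2 : c * (1/3:ℝ)^(k+1) ≤ c * (1/3:ℝ)^k :=
        mul_le_mul_of_nonneg_left
          (pow_le_pow_of_le_one (by norm_num) (by norm_num) (by omega)) hc0.le
      refine ⟨k, ?_⟩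
      linarith
    obtain ⟨N, hPN, hmin⟩ : ∃ N : ℕ, c * (1/3:ℝ)^(N+1) < |h| ∧
        ∀ m : ℕ, m < N → ¬(c * (1/3:ℝ)^(m+1) < |h|) := by
      classical
      exact ⟨Nat.find hex, Nat.find_spec hex, fun m hm => Nat.find_min hex hm⟩
    have hupper : |h| ≤ c * (1/3:ℝ)^N := by
      rcases Nat.eq_zero_or_pos N with h0' | h0'
      · rw [h0', pow_zero, mul_one]
        have h3 : (1/3:ℝ)^(N₂+1) ≤ 1 := pow_le_one₀ (by norm_num) (by norm_num)
        have h4 : c * (1/3:ℝ)^(N₂+1) ≤ c * 1 := mul_le_mul_of_nonneg_left h3 hc0.le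
        linarith
      · have h4 := hmin (N-1) (by omega)
        push_neg at h4
        have e : N - 1 + 1 = N := by omega
        rwa [e] at h4
    have hN₂N : N₂ < N := by
      by_contra hcon
      push_neg at hcon
      have h5 : c * (1/3:ℝ)^(N₂+1) ≤ c * (1/3:ℝ)^(N+1) :=
        mul_le_mul_of_nonneg_left
          (pow_le_pow_of_le_one (by norm_num) (by norm_num) (by omega)) hc0.le
      linarith
    have hlt := hkey2 N (by omega) h hh hupper hPN.le
    have e7 : x + h = y := by rw [hhdef]; ring
    have hsl : slope F x y = (F (x + h) - F x) / h := by
      rw [slope_def_field, e7, hhdef]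
    rw [Real.dist_eq, hsl]
    calc |(F (x + h) - F x) / h - l|
        ≤ |(F (x + h) - F x) / h - S (N+1)| + |S (N+1) - l| := abs_sub_le _ _ _
      _ < ε/2 + ε/2 := by
          refine add_lt_add hlt ?_
          have h6 := hN₁ (N+1) (by omega)
          rwa [Real.dist_eq] at h6
      _ = ε := by ring
  have conv : DifferentiableAt ℝ F x → Tendsto S atTop (nhds (deriv F x)) := by
    intro hdF
    have hD := hdF.hasDerivAt
    rw [hasDerivAt_iff_tendsto_slope, Metric.tendsto_nhdsWithin_nhds] at hD
    rw [Metric.tendsto_atTop]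
    intro ε hε
    obtain ⟨c, hc0, hc1, N₀, hkey2⟩ := key2 (ε/2) (by positivity)
    obtain ⟨η, hη0, hη⟩ := hD (ε/2) (by positivity)
    obtain ⟨k, hk⟩ := exists_pow_lt_of_lt_one (x := η/c)
      (by positivity) (by norm_num : (1/3:ℝ) < 1)
    rw [lt_div_iff₀ hc0] at hk
    refine ⟨max N₀ k + 1, fun K' hK' => ?_⟩
    set N := K' - 1 with hNd
    have hKN : K' = N + 1 := by omega
    have hNN₀ : N₀ ≤ N := by omega
    have hNk : k ≤ N := by omega
    set h : ℝ := c * (1/3:ℝ)^N with hhdef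
    have hhpos : 0 < h := by positivity
    have hh : h ≠ 0 := ne_of_gt hhpos
    have habs : |h| = h := abs_of_pos hhpos
    have hupper : |h| ≤ c * (1/3:ℝ)^N := le_of_eq habs
    have hlower : c * (1/3:ℝ)^(N+1) ≤ |h| := by
      rw [habs]
      exact mul_le_mul_of_nonneg_left
        (pow_le_pow_of_le_one (by norm_num) (by norm_num) (by omega)) hc0.le
    have hlt := hkey2 N hNN₀ h hh hupper hlower
    have hηb : |h| < η := by
      rw [habs, hhdef]
      calc c * (1/3:ℝ)^N ≤ c * (1/3:ℝ)^k :=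
            mul_le_mul_of_nonneg_left
              (pow_le_pow_of_le_one (by norm_num) (by norm_num) hNk) hc0.le
        _ < η := by linarith
    have hy : x + h ∈ ({x}ᶜ : Set ℝ) := by simp [hh]
    have hdist : dist (x + h) x < η := by
      rw [Real.dist_eq, show x + h - x = h by ring]
      exact hηb
    have hsl := hη hy hdist
    rw [Real.dist_eq] at hsl
    have hsl2 : slope F x (x + h) = (F (x + h) - F x) / h := by
      rw [slope_def_field]
      congr 1
      ring
    rw [hsl2] at hsl
    rw [Real.dist_eq, hKN]
    calc |S (N+1) - deriv F x|
        ≤ |S (N+1) - (F (x + h) - F x)/h| + |(F (x + h) - F x)/h - deriv F x| :=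
          abs_sub_le _ _ _
      _ < ε/2 + ε/2 := add_lt_add (by rw [abs_sub_comm]; exact hlt) hsl
      _ = ε := by ring
  exact ⟨⟨fun hd => ⟨deriv F x, conv hd⟩, fun ⟨l, hl⟩ => (main l hl).differentiableAt⟩, main⟩
end
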